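/- arXiv:0908.1645 — 2 statements merged into one kernel-verified Lean document; each statement's English description precedes it below -/
import Mathlib

section
/- Let Λ(E_6) be the E_6 root lattice realized inside the Picard lattice of a cubic surface (basis h, l_1,…,l_6 with h² = 1, l_i² = −1, other products zero, K = −3h + Σl_i) as the orthogonal complement of K. Let ρ be the automorphism induced by the E_6 diagram automorphism with ρ(α_1) = α_6, ρ(α_2) = α_5, and ρ fixing α_3, α_4 (where α_1 = l_1 − l_2, α_2 = l_2 − l_3, α_3 = h − l_1 − l_2 − l_3, α_i = l_{i−1} − l_i for i = 4,5,6). Then the ρ-fixed sublattice Λ(E_6)^ρ equals {a·h + Σ a_i·l_i : a_1 + a_6 = a_2 + a_5 = a_3 + a_4 = −a}, and it is freely generated by h − l_1 − l_2 − l_3, l_1 − l_6, l_2 − l_5, l_3 − l_4; moreover with respect to the negative intersection form it is isometric to the D_4 root lattice. -/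
/-- In the Picard lattice `Fin 7 → ℤ` of a cubic surface (basis
`h = e₀`, `l i = e_{i+1}`, intersection form `b` with `h² = 1`, `lᵢ² = −1`, other
products `0`, `K = −3h + Σ lᵢ`), let `ρ` be the automorphism induced by the `E 6`
diagram automorphism acting on the simple roots `α` of `Λ(E6) = K^⊥` as stated.  Then
the `ρ`-fixed part of `Λ(E6)` equals
`{x : x₁ + x₆ = x₂ + x₅ = x₃ + x₄ = −x₀}`, it is freely generated by
`γ 0 = h − l₁ − l₂ − l₃`, `γ 1 = l₁ − l₆`, `γ 2 = l₂ − l₅`, `γ 3 = l₃ − l₄`, and with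
respect to `−b` the Gram matrix of these generators is the `D 4` Cartan matrix, so it is
isometric to the `D 4` root lattice. -/
theorem E6_fixed_lattice_is_D4
    (b : (Fin 7 → ℤ) → (Fin 7 → ℤ) → ℤ)
    (hb : ∀ x y, b x y = x 0 * y 0 - ∑ i : Fin 6, x i.succ * y i.succ)
    (h : Fin 7 → ℤ) (l : Fin 6 → Fin 7 → ℤ)
    (hh : h = Pi.single 0 1)
    (hl : ∀ i, l i = Pi.single i.succ 1)
    (K : Fin 7 → ℤ)
    (hK : K = -(3 : ℤ) • h + ∑ i : Fin 6, l i)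
    (α : Fin 6 → Fin 7 → ℤ)
    (hα0 : α 0 = l 0 - l 1) (hα1 : α 1 = l 1 - l 2)
    (hα2 : α 2 = h - l 0 - l 1 - l 2)
    (hα3 : α 3 = l 2 - l 3) (hα4 : α 4 = l 3 - l 4) (hα5 : α 5 = l 4 - l 5)
    (ρ : (Fin 7 → ℤ) →ₗ[ℤ] (Fin 7 → ℤ))
    (hρ0 : ρ (α 0) = α 5) (hρ5 : ρ (α 5) = α 0)
    (hρ1 : ρ (α 1) = α 4) (hρ4 : ρ (α 4) = α 1)
    (hρ2 : ρ (α 2) = α 2) (hρ3 : ρ (α 3) = α 3)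
    (γ : Fin 4 → Fin 7 → ℤ)
    (hγ0 : γ 0 = h - l 0 - l 1 - l 2)
    (hγ1 : γ 1 = l 0 - l 5) (hγ2 : γ 2 = l 1 - l 4) (hγ3 : γ 3 = l 2 - l 3)
    (D : Matrix (Fin 4) (Fin 4) ℤ)
    (hD : D = !![2, -1, -1, -1;
                 -1, 2, 0, 0;
                 -1, 0, 2, 0;
                 -1, 0, 0, 2]) :
    ({x | b x K = 0 ∧ ρ x = x} =
      {x | x 1 + x 6 = -(x 0) ∧ x 2 + x 5 = -(x 0) ∧ x 3 + x 4 = -(x 0)}) ∧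
    ((Submodule.span ℤ (Set.range γ) : Set (Fin 7 → ℤ)) = {x | b x K = 0 ∧ ρ x = x}) ∧
    LinearIndependent ℤ γ ∧
    (∀ i j, -(b (γ i) (γ j)) = D i j) := by
  -- explicit coordinate forms
  have ev0 : ∀ (a0 a1 a2 a3 a4 a5 a6 : ℤ), ![a0,a1,a2,a3,a4,a5,a6] (0:Fin 7) = a0 := fun _ _ _ _ _ _ _ => rfl
  have ev1 : ∀ (a0 a1 a2 a3 a4 a5 a6 : ℤ), ![a0,a1,a2,a3,a4,a5,a6] (1:Fin 7) = a1 := fun _ _ _ _ _ _ _ => rfl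
  have ev2 : ∀ (a0 a1 a2 a3 a4 a5 a6 : ℤ), ![a0,a1,a2,a3,a4,a5,a6] (2:Fin 7) = a2 := fun _ _ _ _ _ _ _ => rfl
  have ev3 : ∀ (a0 a1 a2 a3 a4 a5 a6 : ℤ), ![a0,a1,a2,a3,a4,a5,a6] (3:Fin 7) = a3 := fun _ _ _ _ _ _ _ => rfl
  have ev4 : ∀ (a0 a1 a2 a3 a4 a5 a6 : ℤ), ![a0,a1,a2,a3,a4,a5,a6] (4:Fin 7) = a4 := fun _ _ _ _ _ _ _ => rfl
  have ev5 : ∀ (a0 a1 a2 a3 a4 a5 a6 : ℤ), ![a0,a1,a2,a3,a4,a5,a6] (5:Fin 7) = a5 := fun _ _ _ _ _ _ _ => rfl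
  have ev6 : ∀ (a0 a1 a2 a3 a4 a5 a6 : ℤ), ![a0,a1,a2,a3,a4,a5,a6] (6:Fin 7) = a6 := fun _ _ _ _ _ _ _ => rfl
  have hb' : ∀ x y : Fin 7 → ℤ, b x y = x 0 * y 0 -
      (x 1 * y 1 + x 2 * y 2 + x 3 * y 3 + x 4 * y 4 + x 5 * y 5 + x 6 * y 6) := by
    intro x y; rw [hb, Fin.sum_univ_six]; rfl
  have hA0 : α 0 = ![0,1,-1,0,0,0,0] := by rw [hα0, hl 0, hl 1]; decide
  have hA1 : α 1 = ![0,0,1,-1,0,0,0] := by rw [hα1, hl 1, hl 2]; decide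
  have hA2 : α 2 = ![1,-1,-1,-1,0,0,0] := by rw [hα2, hh, hl 0, hl 1, hl 2]; decide
  have hA3 : α 3 = ![0,0,0,1,-1,0,0] := by rw [hα3, hl 2, hl 3]; decide
  have hA4 : α 4 = ![0,0,0,0,1,-1,0] := by rw [hα4, hl 3, hl 4]; decide
  have hA5 : α 5 = ![0,0,0,0,0,1,-1] := by rw [hα5, hl 4, hl 5]; decide
  have hG0 : γ 0 = ![1,-1,-1,-1,0,0,0] := by rw [hγ0, hh, hl 0, hl 1, hl 2]; decide
  have hG1 : γ 1 = ![0,1,0,0,0,0,-1] := by rw [hγ1, hl 0, hl 5]; decide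
  have hG2 : γ 2 = ![0,0,1,0,0,-1,0] := by rw [hγ2, hl 1, hl 4]; decide
  have hG3 : γ 3 = ![0,0,0,1,-1,0,0] := by rw [hγ3, hl 2, hl 3]; decide
  have hK' : K = ![-3,1,1,1,1,1,1] := by
    rw [hK, hh]; simp only [hl]; decide
  have hbK : ∀ x : Fin 7 → ℤ,
      b x K = -3 * x 0 - (x 1 + x 2 + x 3 + x 4 + x 5 + x 6) := by
    intro x; rw [hb', hK']; simp only [ev0, ev1, ev2, ev3, ev4, ev5, ev6]; ring
  -- decomposition into simple roots
  have decomp : ∀ x : Fin 7 → ℤ, x 1 + x 2 + x 3 + x 4 + x 5 + x 6 = -3 * x 0 →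
      x = (x 1 + x 0) • α 0 + (x 1 + x 2 + 2 * x 0) • α 1 + x 0 • α 2 +
          (x 1 + x 2 + x 3 + 3 * x 0) • α 3 + (-(x 5) - x 6) • α 4 + (-(x 6)) • α 5 := by
    intro x hx; funext j
    simp only [hA0, hA1, hA2, hA3, hA4, hA5, Pi.add_apply, Pi.smul_apply, smul_eq_mul]
    fin_cases j <;> simp [ev0, ev1, ev2, ev3, ev4, ev5, ev6] <;> omega
  have hρx : ∀ x : Fin 7 → ℤ, x 1 + x 2 + x 3 + x 4 + x 5 + x 6 = -3 * x 0 →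
      ρ x = (x 1 + x 0) • α 5 + (x 1 + x 2 + 2 * x 0) • α 4 + x 0 • α 2 +
          (x 1 + x 2 + x 3 + 3 * x 0) • α 3 + (-(x 5) - x 6) • α 1 + (-(x 6)) • α 0 := by
    intro x hx
    conv_lhs => rw [decomp x hx]
    simp only [map_add, map_smul, hρ0, hρ1, hρ2, hρ3, hρ4, hρ5]
  have part1 : ({x | b x K = 0 ∧ ρ x = x} : Set (Fin 7 → ℤ)) =
      {x | x 1 + x 6 = -(x 0) ∧ x 2 + x 5 = -(x 0) ∧ x 3 + x 4 = -(x 0)} := by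
    ext x
    simp only [Set.mem_setOf_eq]
    constructor
    · rintro ⟨h1, h2⟩
      have hs : x 1 + x 2 + x 3 + x 4 + x 5 + x 6 = -3 * x 0 := by
        rw [hbK] at h1; omega
      rw [hρx x hs] at h2
      have e1 := congrFun h2 1
      have e2 := congrFun h2 2
      simp [hA0, hA1, hA2, hA3, hA4, hA5, Pi.add_apply, Pi.smul_apply,
        smul_eq_mul, ev0, ev1, ev2, ev3, ev4, ev5, ev6] at e1 e2
      refine ⟨by omega, by omega, by omega⟩
    · rintro ⟨h1, h2, h3⟩
      have hs : x 1 + x 2 + x 3 + x 4 + x 5 + x 6 = -3 * x 0 := by omega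
      refine ⟨by rw [hbK]; omega, ?_⟩
      rw [hρx x hs]
      conv_rhs => rw [decomp x hs]
      rw [show x 1 + x 0 = -(x 6) by omega,
          show x 1 + x 2 + 2 * x 0 = -(x 5) - x 6 by omega]
      abel
  refine ⟨part1, ?_, ?_, ?_⟩
  · -- span γ = fixed set
    ext x
    simp only [SetLike.mem_coe]
    constructor
    · intro hx
      have hmem : x ∈ ({x | x 1 + x 6 = -(x 0) ∧ x 2 + x 5 = -(x 0) ∧ x 3 + x 4 = -(x 0)} :
          Set (Fin 7 → ℤ)) := by
        induction hx using Submodule.span_induction with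
        | mem y hy =>
          obtain ⟨i, rfl⟩ := hy
          fin_cases i <;>
            simp [Set.mem_setOf_eq, hG0, hG1, hG2, hG3, ev0, ev1, ev2, ev3, ev4, ev5, ev6]
        | zero => simp
        | add y z _ _ hy hz =>
          simp only [Set.mem_setOf_eq, Pi.add_apply] at *
          omega
        | smul c y _ hy =>
          simp only [Set.mem_setOf_eq, Pi.smul_apply, smul_eq_mul] at *
          refine ⟨by linear_combination c * hy.1, by linear_combination c * hy.2.1,
            by linear_combination c * hy.2.2⟩
      rw [part1]; exact hmem
    · intro hx
      rw [part1] at hx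
      obtain ⟨h1, h2, h3⟩ := hx
      have hdec : x = x 0 • γ 0 + (x 1 + x 0) • γ 1 + (x 2 + x 0) • γ 2 +
          (x 3 + x 0) • γ 3 := by
        funext j
        simp only [hG0, hG1, hG2, hG3, Pi.add_apply, Pi.smul_apply, smul_eq_mul]
        fin_cases j <;> simp [ev0, ev1, ev2, ev3, ev4, ev5, ev6] <;> omega
      rw [hdec]
      have m : ∀ i : Fin 4, γ i ∈ Submodule.span ℤ (Set.range γ) := fun i =>
        Submodule.subset_span ⟨i, rfl⟩
      exact add_mem (add_mem (add_mem (Submodule.smul_mem _ _ (m 0))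
        (Submodule.smul_mem _ _ (m 1))) (Submodule.smul_mem _ _ (m 2)))
        (Submodule.smul_mem _ _ (m 3))
  · -- linear independence
    rw [Fintype.linearIndependent_iff]
    intro g hg
    rw [Fin.sum_univ_four] at hg
    have e0 := congrFun hg 0
    have e1 := congrFun hg 1
    have e2 := congrFun hg 2
    have e3 := congrFun hg 3
    simp [hG0, hG1, hG2, hG3, Pi.add_apply, Pi.smul_apply, smul_eq_mul,
      Pi.zero_apply, ev0, ev1, ev2, ev3, ev4, ev5, ev6] at e0 e1 e2 e3
    have h0 : g 0 = 0 := by omega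
    have h1 : g 1 = 0 := by omega
    have h2 : g 2 = 0 := by omega
    have h3 : g 3 = 0 := by omega
    intro i
    fin_cases i
    exacts [h0, h1, h2, h3]
  · -- Gram matrix
    intro i j
    subst hD
    fin_cases i <;> fin_cases j <;>
      rw [hb'] <;> simp [hG0, hG1, hG2, hG3, ev0, ev1, ev2, ev3, ev4, ev5, ev6, Matrix.cons_val', Matrix.cons_val_zero, Matrix.cons_val_one, Matrix.head_cons] <;> decide
end

section
/- On a cubic surface (lattice as above), every line belongs to exactly 5 triangles. -/
def dotB (x y : Fin 7 → ℤ) : ℤ :=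
  x 0 * y 0 - (x 1 * y 1 + x 2 * y 2 + x 3 * y 3 + x 4 * y 4 + x 5 * y 5 + x 6 * y 6)

def keyV (x : Fin 7 → ℤ) : ℤ :=
  x 0 + 5 * x 1 + 25 * x 2 + 125 * x 3 + 625 * x 4 + 3125 * x 5 + 15625 * x 6

def lineList : List (Fin 7 → ℤ) := [![0,1,0,0,0,0,0], ![0,0,1,0,0,0,0], ![0,0,0,1,0,0,0], ![0,0,0,0,1,0,0], ![0,0,0,0,0,1,0], ![0,0,0,0,0,0,1], ![1,-1,-1,0,0,0,0], ![1,-1,0,-1,0,0,0], ![1,-1,0,0,-1,0,0], ![1,-1,0,0,0,-1,0], ![1,-1,0,0,0,0,-1], ![1,0,-1,-1,0,0,0], ![1,0,-1,0,-1,0,0], ![1,0,-1,0,0,-1,0], ![1,0,-1,0,0,0,-1], ![1,0,0,-1,-1,0,0], ![1,0,0,-1,0,-1,0], ![1,0,0,-1,0,0,-1], ![1,0,0,0,-1,-1,0], ![1,0,0,0,-1,0,-1], ![1,0,0,0,0,-1,-1], ![2,0,-1,-1,-1,-1,-1], ![2,-1,0,-1,-1,-1,-1], ![2,-1,-1,0,-1,-1,-1],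 ![2,-1,-1,-1,0,-1,-1], ![2,-1,-1,-1,-1,0,-1], ![2,-1,-1,-1,-1,-1,0]]

set_option maxRecDepth 100000 in
def S' : Finset (Fin 7 → ℤ) := ⟨↑lineList, by decide⟩

def W (e : Fin 7 → ℤ) : Finset ((Fin 7 → ℤ) × (Fin 7 → ℤ)) :=
  ((S'.filter fun x => dotB e x = 1) ×ˢ (S'.filter fun x => dotB e x = 1)).filter
    fun p => keyV p.1 < keyV p.2 ∧ dotB p.1 p.2 = 1

set_option maxRecDepth 1000000 in
set_option maxHeartbeats 1000000 in
lemma dec_count : ∀ e ∈ S', (W e).card = 5 := by decide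

set_option maxRecDepth 1000000 in
lemma dec_lines : ∀ v ∈ S', dotB v v = -1 ∧ dotB v ![(-3:ℤ),1,1,1,1,1,1] = -1 := by decide

set_option maxRecDepth 1000000 in
set_option maxHeartbeats 1000000 in
lemma dec_keyinj : ∀ x ∈ S', ∀ y ∈ S', keyV x = keyV y → x = y := by decide

lemma sq01 (z : ℤ) : 0 ≤ z * (z - 1) := by
  rcases le_or_gt 1 z with h | h
  · nlinarith
  · have h2 : z ≤ 0 := by omega
    nlinarith

lemma sq01' (z : ℤ) : 0 ≤ z * (z + 1) := by
  rcases le_or_gt 0 z with h | h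
  · nlinarith
  · have h2 : z + 1 ≤ 0 := by omega
    nlinarith

set_option maxRecDepth 100000 in
set_option maxHeartbeats 1000000 in
lemma mem_S'_of (e : Fin 7 → ℤ) (hE1 : dotB e e = -1)
    (hE2 : dotB e ![(-3:ℤ),1,1,1,1,1,1] = -1) : e ∈ S' := by
  have hrep : e = ![e 0, e 1, e 2, e 3, e 4, e 5, e 6] := by
    funext i; fin_cases i <;> rfl
  have E1 : e 0 * e 0 - (e 1 * e 1 + e 2 * e 2 + e 3 * e 3 + e 4 * e 4 + e 5 * e 5 + e 6 * e 6) = -1 := hE1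
  have E2 : e 0 * (-3) - (e 1 * 1 + e 2 * 1 + e 3 * 1 + e 4 * 1 + e 5 * 1 + e 6 * 1) = -1 := hE2
  have E2' : 3 * e 0 + (e 1 + e 2 + e 3 + e 4 + e 5 + e 6) = 1 := by linarith
  have CS : (e 1 + e 2 + e 3 + e 4 + e 5 + e 6)^2 ≤ 6 * (e 1 * e 1 + e 2 * e 2 + e 3 * e 3 + e 4 * e 4 + e 5 * e 5 + e 6 * e 6) := by
    linarith [sq_nonneg (e 1 - e 2), sq_nonneg (e 1 - e 3), sq_nonneg (e 1 - e 4), sq_nonneg (e 1 - e 5), sq_nonneg (e 1 - e 6), sq_nonneg (e 2 - e 3), sq_nonneg (e 2 - e 4), sq_nonneg (e 2 - e 5), sq_nonneg (e 2 - e 6), sq_nonneg (e 3 - e 4), sq_nonneg (e 3 - e 5), sq_nonneg (e 3 - e 6), sq_nonneg (e 4 - e 5), sq_nonneg (e 4 - e 6), sq_nonneg (e 5 - e 6)]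
  have h9 : (e 1 + e 2 + e 3 + e 4 + e 5 + e 6)^2 = (1 - 3 * e 0)^2 := by
    rw [show e 1 + e 2 + e 3 + e 4 + e 5 + e 6 = 1 - 3 * e 0 from by linarith]
  have hq : 3 * (e 0 * e 0) ≤ 6 * e 0 + 5 := by nlinarith [CS, h9, E1]
  have hlow : 0 ≤ e 0 := by nlinarith [hq, sq_nonneg (e 0 + 1)]
  have hhigh : e 0 ≤ 2 := by nlinarith [hq, sq_nonneg (e 0 - 3)]
  clear CS h9 hq
  have h0 : e 0 = 0 ∨ e 0 = 1 ∨ e 0 = 2 := by omega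
  rcases h0 with h0 | h0 | h0
  · -- e 0 = 0 : each e i ∈ {0,1}
    rw [h0] at E1 E2'
    have hs : e 1 * (e 1 - 1) + e 2 * (e 2 - 1) + e 3 * (e 3 - 1) + e 4 * (e 4 - 1) + e 5 * (e 5 - 1) + e 6 * (e 6 - 1) = 0 := by linarith [E1, E2']
    have q1 : e 1 * (e 1 - 1) = 0 := le_antisymm (by linarith [sq01 (e 2), sq01 (e 3), sq01 (e 4), sq01 (e 5), sq01 (e 6)]) (sq01 (e 1))
    have q2 : e 2 * (e 2 - 1) = 0 := le_antisymm (by linarith [sq01 (e 1), sq01 (e 3), sq01 (e 4), sq01 (e 5), sq01 (e 6)]) (sq01 (e 2))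
    have q3 : e 3 * (e 3 - 1) = 0 := le_antisymm (by linarith [sq01 (e 1), sq01 (e 2), sq01 (e 4), sq01 (e 5), sq01 (e 6)]) (sq01 (e 3))
    have q4 : e 4 * (e 4 - 1) = 0 := le_antisymm (by linarith [sq01 (e 1), sq01 (e 2), sq01 (e 3), sq01 (e 5), sq01 (e 6)]) (sq01 (e 4))
    have q5 : e 5 * (e 5 - 1) = 0 := le_antisymm (by linarith [sq01 (e 1), sq01 (e 2), sq01 (e 3), sq01 (e 4), sq01 (e 6)]) (sq01 (e 5))
    have q6 : e 6 * (e 6 - 1) = 0 := le_antisymm (by linarith [sq01 (e 1), sq01 (e 2), sq01 (e 3), sq01 (e 4), sq01 (e 5)]) (sq01 (e 6))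
    have hx1 : e 1 = 0 ∨ e 1 = 1 := by have := mul_eq_zero.mp q1; omega
    have hx2 : e 2 = 0 ∨ e 2 = 1 := by have := mul_eq_zero.mp q2; omega
    have hx3 : e 3 = 0 ∨ e 3 = 1 := by have := mul_eq_zero.mp q3; omega
    have hx4 : e 4 = 0 ∨ e 4 = 1 := by have := mul_eq_zero.mp q4; omega
    have hx5 : e 5 = 0 ∨ e 5 = 1 := by have := mul_eq_zero.mp q5; omega
    have hx6 : e 6 = 0 ∨ e 6 = 1 := by have := mul_eq_zero.mp q6; omega
    clear E1 E2 hE1 hE2 hs q1 q2 q3 q4 q5 q6 hlow hhigh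
    rcases hx1 with h1 | h1 <;> rcases hx2 with h2 | h2 <;> rcases hx3 with h3 | h3 <;>
      rcases hx4 with h4 | h4 <;> rcases hx5 with h5 | h5 <;> rcases hx6 with h6 | h6 <;>
      first
        | omega
        | (rw [hrep, h0, h1, h2, h3, h4, h5, h6]; decide)
  · rw [h0] at E1 E2'
    have hs : e 1 * (e 1 + 1) + e 2 * (e 2 + 1) + e 3 * (e 3 + 1) + e 4 * (e 4 + 1) + e 5 * (e 5 + 1) + e 6 * (e 6 + 1) = 0 := by linarith [E1, E2']
    have q1 : e 1 * (e 1 + 1) = 0 := le_antisymm (by linarith [sq01' (e 2), sq01' (e 3), sq01' (e 4), sq01' (e 5), sq01' (e 6)]) (sq01' (e 1))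
    have q2 : e 2 * (e 2 + 1) = 0 := le_antisymm (by linarith [sq01' (e 1), sq01' (e 3), sq01' (e 4), sq01' (e 5), sq01' (e 6)]) (sq01' (e 2))
    have q3 : e 3 * (e 3 + 1) = 0 := le_antisymm (by linarith [sq01' (e 1), sq01' (e 2), sq01' (e 4), sq01' (e 5), sq01' (e 6)]) (sq01' (e 3))
    have q4 : e 4 * (e 4 + 1) = 0 := le_antisymm (by linarith [sq01' (e 1), sq01' (e 2), sq01' (e 3), sq01' (e 5), sq01' (e 6)]) (sq01' (e 4))
    have q5 : e 5 * (e 5 + 1) = 0 := le_antisymm (by linarith [sq01' (e 1), sq01' (e 2), sq01' (e 3), sq01' (e 4), sq01' (e 6)]) (sq01' (e 5))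
    have q6 : e 6 * (e 6 + 1) = 0 := le_antisymm (by linarith [sq01' (e 1), sq01' (e 2), sq01' (e 3), sq01' (e 4), sq01' (e 5)]) (sq01' (e 6))
    have hx1 : e 1 = 0 ∨ e 1 = -1 := by have := mul_eq_zero.mp q1; omega
    have hx2 : e 2 = 0 ∨ e 2 = -1 := by have := mul_eq_zero.mp q2; omega
    have hx3 : e 3 = 0 ∨ e 3 = -1 := by have := mul_eq_zero.mp q3; omega
    have hx4 : e 4 = 0 ∨ e 4 = -1 := by have := mul_eq_zero.mp q4; omega
    have hx5 : e 5 = 0 ∨ e 5 = -1 := by have := mul_eq_zero.mp q5; omega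
    have hx6 : e 6 = 0 ∨ e 6 = -1 := by have := mul_eq_zero.mp q6; omega
    clear E1 E2 hE1 hE2 hs q1 q2 q3 q4 q5 q6 hlow hhigh
    rcases hx1 with h1 | h1 <;> rcases hx2 with h2 | h2 <;> rcases hx3 with h3 | h3 <;>
      rcases hx4 with h4 | h4 <;> rcases hx5 with h5 | h5 <;> rcases hx6 with h6 | h6 <;>
      first
        | omega
        | (rw [hrep, h0, h1, h2, h3, h4, h5, h6]; decide)
  · rw [h0] at E1 E2'
    have hs : e 1 * (e 1 + 1) + e 2 * (e 2 + 1) + e 3 * (e 3 + 1) + e 4 * (e 4 + 1) + e 5 * (e 5 + 1) + e 6 * (e 6 + 1) = 0 := by linarith [E1, E2']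
    have q1 : e 1 * (e 1 + 1) = 0 := le_antisymm (by linarith [sq01' (e 2), sq01' (e 3), sq01' (e 4), sq01' (e 5), sq01' (e 6)]) (sq01' (e 1))
    have q2 : e 2 * (e 2 + 1) = 0 := le_antisymm (by linarith [sq01' (e 1), sq01' (e 3), sq01' (e 4), sq01' (e 5), sq01' (e 6)]) (sq01' (e 2))
    have q3 : e 3 * (e 3 + 1) = 0 := le_antisymm (by linarith [sq01' (e 1), sq01' (e 2), sq01' (e 4), sq01' (e 5), sq01' (e 6)]) (sq01' (e 3))
    have q4 : e 4 * (e 4 + 1) = 0 := le_antisymm (by linarith [sq01' (e 1), sq01' (e 2), sq01' (e 3), sq01' (e 5), sq01' (e 6)]) (sq01' (e 4))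
    have q5 : e 5 * (e 5 + 1) = 0 := le_antisymm (by linarith [sq01' (e 1), sq01' (e 2), sq01' (e 3), sq01' (e 4), sq01' (e 6)]) (sq01' (e 5))
    have q6 : e 6 * (e 6 + 1) = 0 := le_antisymm (by linarith [sq01' (e 1), sq01' (e 2), sq01' (e 3), sq01' (e 4), sq01' (e 5)]) (sq01' (e 6))
    have hx1 : e 1 = 0 ∨ e 1 = -1 := by have := mul_eq_zero.mp q1; omega
    have hx2 : e 2 = 0 ∨ e 2 = -1 := by have := mul_eq_zero.mp q2; omega
    have hx3 : e 3 = 0 ∨ e 3 = -1 := by have := mul_eq_zero.mp q3; omega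
    have hx4 : e 4 = 0 ∨ e 4 = -1 := by have := mul_eq_zero.mp q4; omega
    have hx5 : e 5 = 0 ∨ e 5 = -1 := by have := mul_eq_zero.mp q5; omega
    have hx6 : e 6 = 0 ∨ e 6 = -1 := by have := mul_eq_zero.mp q6; omega
    clear E1 E2 hE1 hE2 hs q1 q2 q3 q4 q5 q6 hlow hhigh
    rcases hx1 with h1 | h1 <;> rcases hx2 with h2 | h2 <;> rcases hx3 with h3 | h3 <;>
      rcases hx4 with h4 | h4 <;> rcases hx5 with h5 | h5 <;> rcases hx6 with h6 | h6 <;>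
      first
        | omega
        | (rw [hrep, h0, h1, h2, h3, h4, h5, h6]; decide)

lemma dotB_symm (x y : Fin 7 → ℤ) : dotB x y = dotB y x := by unfold dotB; ring

/-- On a cubic surface (Picard lattice `Fin 7 → ℤ`, intersection form `b`,
`K = −3h + Σ lᵢ`, lines `L`, triangles `T` as unordered triples of pairwise-meeting
lines), every line belongs to exactly 5 triangles. -/
theorem cubic_surface_line_in_five_triangles
    (b : (Fin 7 → ℤ) → (Fin 7 → ℤ) → ℤ)
    (hb : ∀ x y, b x y = x 0 * y 0 - ∑ i : Fin 6, x i.succ * y i.succ)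
    (h : Fin 7 → ℤ) (l : Fin 6 → Fin 7 → ℤ)
    (hh : h = Pi.single 0 1)
    (hl : ∀ i, l i = Pi.single i.succ 1)
    (K : Fin 7 → ℤ)
    (hK : K = -(3 : ℤ) • h + ∑ i : Fin 6, l i)
    (L : Set (Fin 7 → ℤ))
    (hL : L = {e | b e e = -1 ∧ b e K = -1})
    (T : Set (Finset (Fin 7 → ℤ)))
    (hT : T = {t : Finset (Fin 7 → ℤ) | t.card = 3 ∧ ↑t ⊆ L ∧
      ∀ e ∈ t, ∀ e' ∈ t, e ≠ e' → b e e' = 1}) :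
    ∀ e ∈ L, Set.ncard {t | t ∈ T ∧ e ∈ t} = 5 := by
  intro e he
  have hbd : ∀ x y, b x y = dotB x y := by
    intro x y
    rw [hb x y, Fin.sum_univ_six]
    rfl
  have hKv : K = ![(-3:ℤ),1,1,1,1,1,1] := by
    rw [hK]
    funext i
    fin_cases i <;> simp [hh, hl, Fin.sum_univ_six, Pi.single_apply] <;> decide
  have hLS : L = ↑S' := by
    ext v
    rw [hL]
    simp only [Set.mem_setOf_eq, Finset.mem_coe]
    constructor
    · rintro ⟨h1, h2⟩
      exact mem_S'_of v (by rw [← hbd]; exact h1) (by rw [← hKv, ← hbd]; exact h2)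
    · intro hv
      obtain ⟨d1, d2⟩ := dec_lines v hv
      exact ⟨by rw [hbd]; exact d1, by rw [hbd, hKv]; exact d2⟩
  have heS : e ∈ S' := by
    rw [hLS] at he; exact Finset.mem_coe.mp he
  have heL : e ∈ L := by rw [hLS]; exact Finset.mem_coe.mpr heS
  have hee : dotB e e = -1 := (dec_lines e heS).1
  have hWmem : ∀ p : (Fin 7 → ℤ) × (Fin 7 → ℤ), p ∈ W e ↔
      p.1 ∈ S' ∧ p.2 ∈ S' ∧ dotB e p.1 = 1 ∧ dotB e p.2 = 1 ∧
      keyV p.1 < keyV p.2 ∧ dotB p.1 p.2 = 1 := by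
    intro p
    simp only [W, Finset.mem_filter, Finset.mem_product]
    tauto
  have hne : ∀ x, dotB e x = 1 → x ≠ e := by
    intro x hx hxe
    rw [hxe, hee] at hx
    exact absurd hx (by norm_num)
  have hinj : Set.InjOn
      (fun p : (Fin 7 → ℤ) × (Fin 7 → ℤ) => insert e ({p.1, p.2} : Finset (Fin 7 → ℤ)))
      ↑(W e) := by
    intro p hp q hq hpq
    simp only [Finset.mem_coe] at hp hq
    obtain ⟨p1S, p2S, pd1, pd2, pk, pd12⟩ := (hWmem p).mp hp
    obtain ⟨q1S, q2S, qd1, qd2, qk, qd12⟩ := (hWmem q).mp hq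
    simp only at hpq
    have h1 : p.1 = q.1 ∨ p.1 = q.2 := by
      have hm : p.1 ∈ insert e ({q.1, q.2} : Finset (Fin 7 → ℤ)) := by
        rw [← hpq]; simp
      simpa [hne p.1 pd1] using hm
    have h2 : p.2 = q.1 ∨ p.2 = q.2 := by
      have hm : p.2 ∈ insert e ({q.1, q.2} : Finset (Fin 7 → ℤ)) := by
        rw [← hpq]; simp
      simpa [hne p.2 pd2] using hm
    rcases h1 with h1 | h1 <;> rcases h2 with h2 | h2
    · rw [h1, h2] at pk
      exact absurd pk (lt_irrefl _)
    · exact Prod.ext h1 h2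
    · rw [h1, h2] at pk
      exact absurd pk (not_lt.mpr (le_of_lt qk))
    · rw [h1, h2] at pk
      exact absurd pk (lt_irrefl _)
  have himg : {t | t ∈ T ∧ e ∈ t} =
      (fun p : (Fin 7 → ℤ) × (Fin 7 → ℤ) => insert e ({p.1, p.2} : Finset (Fin 7 → ℤ))) ''
        ↑(W e) := by
    ext t
    simp only [Set.mem_setOf_eq, Set.mem_image, Finset.mem_coe, hT]
    constructor
    · rintro ⟨⟨hcard, hsub, hpw⟩, het⟩
      obtain ⟨x, y, z, hxy, hxz, hyz, rfl⟩ := Finset.card_eq_three.mp hcard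
      have hxS : x ∈ S' := by
        rw [hLS] at hsub
        exact Finset.mem_coe.mp (hsub (by simp))
      have hyS : y ∈ S' := by
        rw [hLS] at hsub
        exact Finset.mem_coe.mp (hsub (by simp))
      have hzS : z ∈ S' := by
        rw [hLS] at hsub
        exact Finset.mem_coe.mp (hsub (by simp))
      have build : ∀ u v : Fin 7 → ℤ, u ≠ v → u ∈ S' → v ∈ S' → dotB e u = 1 →
          dotB e v = 1 → dotB u v = 1 →
          ∃ p : (Fin 7 → ℤ) × (Fin 7 → ℤ), p ∈ W e ∧
            insert e ({p.1, p.2} : Finset (Fin 7 → ℤ)) = insert e {u, v} := by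
        intro u v huv hu hv a1 a2 a3
        rcases lt_trichotomy (keyV u) (keyV v) with hk | hk | hk
        · exact ⟨(u, v), (hWmem (u, v)).mpr ⟨hu, hv, a1, a2, hk, a3⟩, rfl⟩
        · exact absurd (dec_keyinj u hu v hv hk) huv
        · exact ⟨(v, u), (hWmem (v, u)).mpr ⟨hv, hu, a2, a1, hk, by rw [dotB_symm]; exact a3⟩,
            by rw [Finset.pair_comm]⟩
      have het' : e = x ∨ e = y ∨ e = z := by simpa using het
      rcases het' with rfl | het' 
      · obtain ⟨p, hp, heq⟩ := build y z hyz hyS hzS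
          (by rw [← hbd]; exact hpw e (by simp) y (by simp) hxy)
          (by rw [← hbd]; exact hpw e (by simp) z (by simp) hxz)
          (by rw [← hbd]; exact hpw y (by simp) z (by simp) hyz)
        exact ⟨p, hp, heq.trans (by ext a; simp; try tauto)⟩
      rcases het' with rfl | rfl
      · obtain ⟨p, hp, heq⟩ := build x z hxz hxS hzS
          (by rw [← hbd]; exact hpw e (by simp) x (by simp) (Ne.symm hxy))
          (by rw [← hbd]; exact hpw e (by simp) z (by simp) hyz)
          (by rw [← hbd]; exact hpw x (by simp) z (by simp) hxz)
        exact ⟨p, hp, heq.trans (by ext a; simp; try tauto)⟩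
      · obtain ⟨p, hp, heq⟩ := build x y hxy hxS hyS
          (by rw [← hbd]; exact hpw e (by simp) x (by simp) (Ne.symm hxz))
          (by rw [← hbd]; exact hpw e (by simp) y (by simp) (Ne.symm hyz))
          (by rw [← hbd]; exact hpw x (by simp) y (by simp) hxy)
        exact ⟨p, hp, heq.trans (by ext a; simp; try tauto)⟩
    · rintro ⟨p, hp, rfl⟩
      obtain ⟨p1S, p2S, pd1, pd2, pk, pd12⟩ := (hWmem p).mp hp
      have hxe : p.1 ≠ e := hne p.1 pd1
      have hye : p.2 ≠ e := hne p.2 pd2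
      have hxy : p.1 ≠ p.2 := by
        intro hx
        rw [hx] at pk
        exact absurd pk (lt_irrefl _)
      refine ⟨⟨?_, ?_, ?_⟩, Finset.mem_insert_self _ _⟩
      · rw [Finset.card_insert_of_notMem (by simp [Ne.symm hxe, Ne.symm hye]),
          Finset.card_pair hxy]
      · intro a ha
        simp only [Finset.coe_insert, Set.mem_insert_iff, Finset.coe_singleton, Set.mem_singleton_iff] at ha
        rcases ha with rfl | rfl | rfl
        · exact heL
        · rw [hLS]; exact Finset.mem_coe.mpr p1S
        · rw [hLS]; exact Finset.mem_coe.mpr p2S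
      · intro a ha c hc hac
        simp only [Finset.mem_insert, Finset.mem_singleton] at ha hc
        rcases ha with rfl | rfl | rfl <;> rcases hc with rfl | rfl | rfl <;>
          first
            | exact absurd rfl hac
            | (rw [hbd]; assumption)
            | (rw [hbd, dotB_symm]; assumption)
  rw [himg, Set.ncard_image_of_injOn hinj, Set.ncard_coe_finset, dec_count e heS]
end
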